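/- Let f be a Steinhaus random multiplicative function and q a natural number. For any complex numbers (a_n)_{n≤N}, E[|Σ_{n≤N} a_n f(n)|^{2q}] ≤ (Σ_{n≤N} |a_n|² d_q(n))^q, where d_q(n) is the q-fold divisor function (the number of q-tuples of naturals with product n). -/

import Mathlib

open MeasureTheory ProbabilityTheory

/-- A random variable `z` is uniformly distributed on the unit circle if it is of the
form `z = e^{2πiθ}` for a measurable `θ` uniform on `[0,1]`. -/
def UniformUnitCircle {Ω : Type*} [MeasurableSpace Ω] (μ : Measure Ω) (z : Ω → ℂ) : Prop :=
  ∃ θ : Ω → ℝ, Measurable θ ∧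
    Measure.map θ μ = volume.restrict (Set.Icc (0 : ℝ) 1) ∧
    ∀ ω, z ω = Complex.exp (2 * Real.pi * Complex.I * θ ω)

/-- `f` is a Steinhaus random multiplicative function. -/
def IsSteinhaus {Ω : Type*} [MeasurableSpace Ω] (μ : Measure Ω) (f : Ω → ℕ → ℂ) : Prop :=
  iIndepFun (fun (p : Nat.Primes) (ω : Ω) => f ω p) μ ∧
  (∀ p : Nat.Primes, UniformUnitCircle μ fun ω => f ω p) ∧
  ∀ ω n, f ω n = ∏ p ∈ n.primeFactors, f ω p ^ n.factorization p

/-- The `q`-fold divisor function: the number of `q`-tuples of positive integers whose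
product is `n`. -/
def dfold (q n : ℕ) : ℕ :=
  ((Fintype.piFinset fun _ : Fin q => Finset.Icc 1 n).filter fun t => ∏ i, t i = n).card

set_option maxHeartbeats 1000000
set_option linter.unusedSectionVars false

namespace SteinhausAux
open Finset Complex


lemma mem_dfoldSet {q n : ℕ} {t : Fin q → ℕ} :
    t ∈ (Fintype.piFinset fun _ : Fin q => Finset.Icc 1 n).filter (fun t => ∏ i, t i = n) ↔
      (∀ i, t i ∈ Finset.Icc 1 n) ∧ ∏ i, t i = n := by
  simp [Fintype.mem_piFinset]

lemma dfold_one (q : ℕ) : dfold q 1 = 1 := by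
  unfold dfold
  rw [Finset.card_eq_one]
  refine ⟨fun _ => 1, ?_⟩
  ext t
  simp only [mem_dfoldSet, Finset.mem_singleton, Finset.mem_Icc]
  constructor
  · rintro ⟨h1, _⟩
    funext i
    exact le_antisymm (h1 i).2 (h1 i).1
  · rintro rfl
    simp

/-- remaining part after greedily extracting gcds -/
def rem (t : ℕ → ℕ) (m : ℕ) : ℕ → ℕ
  | 0 => m
  | k+1 => rem t m k / Nat.gcd (t k) (rem t m k)

def ug (t : ℕ → ℕ) (m k : ℕ) : ℕ := Nat.gcd (t k) (rem t m k)

lemma rem_succ_mul (t : ℕ → ℕ) (m k : ℕ) : rem t m (k+1) * ug t m k = rem t m k :=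
  Nat.div_mul_cancel (Nat.gcd_dvd_right _ _)

lemma prod_ug_mul_rem (t : ℕ → ℕ) (m : ℕ) : ∀ k, (∏ j ∈ range k, ug t m j) * rem t m k = m := by
  intro k
  induction k with
  | zero => simp [rem]
  | succ k ih =>
    rw [Finset.prod_range_succ, mul_right_comm, mul_assoc, rem_succ_mul, ih]

lemma div_gcd_dvd {r t P : ℕ} (ht : 0 < t) (h : r ∣ t * P) : r / Nat.gcd t r ∣ P := by
  have hg : 0 < Nat.gcd t r := Nat.gcd_pos_of_pos_left r ht
  have hco : Nat.Coprime (r / Nat.gcd t r) (t / Nat.gcd t r) :=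
    (Nat.coprime_div_gcd_div_gcd hg).symm
  have hdvd : r / Nat.gcd t r ∣ (t / Nat.gcd t r) * P := by
    have h2 : r / Nat.gcd t r * Nat.gcd t r ∣ (t / Nat.gcd t r) * P * Nat.gcd t r := by
      rw [Nat.div_mul_cancel (Nat.gcd_dvd_right t r), mul_right_comm,
        Nat.div_mul_cancel (Nat.gcd_dvd_left t r)]
      exact h
    exact (mul_dvd_mul_iff_right hg.ne').mp h2
  exact hco.dvd_of_dvd_mul_left hdvd

lemma rem_dvd (t : ℕ → ℕ) (m q : ℕ) (ht : ∀ k < q, 0 < t k) (hm : m ∣ ∏ j ∈ range q, t j) :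
    ∀ k ≤ q, rem t m k ∣ ∏ j ∈ Ico k q, t j := by
  intro k
  induction k with
  | zero =>
    intro _
    show m ∣ _
    rw [← Finset.range_eq_Ico]
    exact hm
  | succ k ih =>
    intro hk
    have hk' : k < q := hk
    have h1 : rem t m k ∣ t k * ∏ j ∈ Ico (k+1) q, t j := by
      have h0 := ih hk'.le
      rwa [Finset.prod_eq_prod_Ico_succ_bot hk'] at h0
    exact div_gcd_dvd (ht k hk') h1

lemma rem_eq_one (t : ℕ → ℕ) (m q : ℕ) (ht : ∀ k < q, 0 < t k) (hm : m ∣ ∏ j ∈ range q, t j) :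
    rem t m q = 1 := by
  have := rem_dvd t m q ht hm q le_rfl
  simpa using this

lemma prod_ug (t : ℕ → ℕ) (m q : ℕ) (ht : ∀ k < q, 0 < t k) (hm : m ∣ ∏ j ∈ range q, t j) :
    (∏ j ∈ range q, ug t m j) = m := by
  have := prod_ug_mul_rem t m q
  rwa [rem_eq_one t m q ht hm, mul_one] at this


/-- extension of a `Fin q` tuple to `ℕ` by 1s -/
def ext (q : ℕ) (t : Fin q → ℕ) : ℕ → ℕ := fun k => if h : k < q then t ⟨k, h⟩ else 1

lemma prod_ext (q : ℕ) (t : Fin q → ℕ) :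
    ∏ j ∈ range q, ext q t j = ∏ i : Fin q, t i := by
  rw [← Fin.prod_univ_eq_prod_range (fun j => ext q t j) q]
  exact Finset.prod_congr rfl fun i _ => by simp [ext, i.isLt]

lemma dfold_mul_le (q : ℕ) {m n : ℕ} (hm : 1 ≤ m) (hn : 1 ≤ n) :
    dfold q (m * n) ≤ dfold q m * dfold q n := by
  classical
  unfold dfold
  rw [← Finset.card_product]
  set A := (Fintype.piFinset fun _ : Fin q => Finset.Icc 1 (m*n)).filter
      (fun t => ∏ i, t i = m * n) with hA
  set B := (Fintype.piFinset fun _ : Fin q => Finset.Icc 1 m).filter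
      (fun t => ∏ i, t i = m) with hB
  set C := (Fintype.piFinset fun _ : Fin q => Finset.Icc 1 n).filter
      (fun t => ∏ i, t i = n) with hC
  set Φ : (Fin q → ℕ) → (Fin q → ℕ) × (Fin q → ℕ) :=
    fun t => (fun i => ug (ext q t) m i.val, fun i => t i / ug (ext q t) m i.val) with hΦ
  apply Finset.card_le_card_of_injOn Φ
  · intro t ht
    rw [hA, Finset.mem_coe, mem_dfoldSet] at ht
    obtain ⟨hmem, hprod⟩ := ht
    have htpos : ∀ i, 1 ≤ t i := fun i => (Finset.mem_Icc.mp (hmem i)).1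
    have hextpos : ∀ k < q, 0 < ext q t k := fun k hk => by
      simpa [ext, hk] using Nat.succ_le_iff.mp (htpos ⟨k, hk⟩)
    have hdvd : m ∣ ∏ j ∈ range q, ext q t j := by
      rw [prod_ext q t, hprod]
      exact ⟨n, rfl⟩
    have hprodu : ∏ i : Fin q, ug (ext q t) m i.val = m := by
      rw [Fin.prod_univ_eq_prod_range (fun j => ug (ext q t) m j) q]
      exact prod_ug (ext q t) m q hextpos hdvd
    have hudvdt : ∀ i : Fin q, ug (ext q t) m i.val ∣ t i := fun i => by
      have : ug (ext q t) m i.val ∣ ext q t i.val := Nat.gcd_dvd_left _ _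
      simpa [ext, i.isLt] using this
    have hupos : ∀ i : Fin q, 1 ≤ ug (ext q t) m i.val := fun i => by
      have hdvdm := Finset.dvd_prod_of_mem (fun i : Fin q => ug (ext q t) m i.val) (mem_univ i)
      rw [hprodu] at hdvdm
      exact Nat.pos_of_ne_zero fun h0 => by simp [h0] at hdvdm; omega
    have hprodv : ∏ i : Fin q, t i / ug (ext q t) m i.val = n := by
      have hmul : (∏ i : Fin q, t i / ug (ext q t) m i.val) * (∏ i : Fin q, ug (ext q t) m i.val)
          = m * n := by
        rw [← Finset.prod_mul_distrib, ← hprod]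
        exact Finset.prod_congr rfl fun i _ => Nat.div_mul_cancel (hudvdt i)
      rw [hprodu, mul_comm _ m] at hmul
      exact Nat.eq_of_mul_eq_mul_left hm hmul
    have hvpos : ∀ i : Fin q, 1 ≤ t i / ug (ext q t) m i.val := fun i => by
      have hdvdn := Finset.dvd_prod_of_mem (fun i : Fin q => t i / ug (ext q t) m i.val)
        (mem_univ i)
      rw [hprodv] at hdvdn
      exact Nat.pos_of_ne_zero fun h0 => by simp [h0] at hdvdn; omega
    rw [Finset.mem_coe, Finset.mem_product, hB, hC, mem_dfoldSet, mem_dfoldSet]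
    refine ⟨⟨fun i => Finset.mem_Icc.mpr ⟨hupos i, Nat.le_of_dvd hm ?_⟩, hprodu⟩,
      fun i => Finset.mem_Icc.mpr ⟨hvpos i, Nat.le_of_dvd hn ?_⟩, hprodv⟩
    · have hdvdm := Finset.dvd_prod_of_mem (fun i : Fin q => ug (ext q t) m i.val) (mem_univ i)
      rwa [hprodu] at hdvdm
    · have hdvdn := Finset.dvd_prod_of_mem (fun i : Fin q => t i / ug (ext q t) m i.val)
        (mem_univ i)
      rwa [hprodv] at hdvdn
  · intro t ht s hs heq
    simp only [Finset.mem_coe, hA, mem_dfoldSet] at ht hs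
    have htpos : ∀ i, 1 ≤ t i := fun i => (Finset.mem_Icc.mp (ht.1 i)).1
    have hudvdt : ∀ i : Fin q, ug (ext q t) m i.val ∣ t i := fun i => by
      have : ug (ext q t) m i.val ∣ ext q t i.val := Nat.gcd_dvd_left _ _
      simpa [ext, i.isLt] using this
    have hudvds : ∀ i : Fin q, ug (ext q s) m i.val ∣ s i := fun i => by
      have : ug (ext q s) m i.val ∣ ext q s i.val := Nat.gcd_dvd_left _ _
      simpa [ext, i.isLt] using this
    have h1 : (fun i : Fin q => ug (ext q t) m i.val) = fun i => ug (ext q s) m i.val :=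
      congrArg Prod.fst heq
    have h2 : (fun i : Fin q => t i / ug (ext q t) m i.val)
        = fun i => s i / ug (ext q s) m i.val := congrArg Prod.snd heq
    funext i
    have e1 : ug (ext q t) m i.val = ug (ext q s) m i.val := congrFun h1 i
    have e2 : t i / ug (ext q t) m i.val = s i / ug (ext q s) m i.val := congrFun h2 i
    calc t i = t i / ug (ext q t) m i.val * ug (ext q t) m i.val :=
          (Nat.div_mul_cancel (hudvdt i)).symm
      _ = s i / ug (ext q s) m i.val * ug (ext q s) m i.val := by
          rw [e1] at e2 ⊢; rw [e2]
      _ = s i := Nat.div_mul_cancel (hudvds i)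

lemma dfold_prod_le {ι : Type*} (q : ℕ) (s : Finset ι) (g : ι → ℕ) (hg : ∀ i ∈ s, 1 ≤ g i) :
    dfold q (∏ i ∈ s, g i) ≤ ∏ i ∈ s, dfold q (g i) := by
  classical
  induction s using Finset.cons_induction with
  | empty => simp [dfold_one]
  | cons a s ha ih =>
    rw [Finset.prod_cons, Finset.prod_cons]
    have h1 : 1 ≤ g a := hg a (Finset.mem_cons_self a s)
    have h2 : 1 ≤ ∏ i ∈ s, g i := Finset.one_le_prod' fun i hi => hg i (Finset.mem_cons_of_mem hi)
    calc dfold q (g a * ∏ i ∈ s, g i) ≤ dfold q (g a) * dfold q (∏ i ∈ s, g i) :=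
          dfold_mul_le q h1 h2
      _ ≤ dfold q (g a) * ∏ i ∈ s, dfold q (g i) :=
          Nat.mul_le_mul_left _ (ih fun i hi => hg i (Finset.mem_cons_of_mem hi))

variable {Ω : Type*} [MeasurableSpace Ω] {μ : Measure Ω}

lemma norm_of_uuc {z : Ω → ℂ} (hz : UniformUnitCircle μ z) (ω : Ω) : ‖z ω‖ = 1 := by
  obtain ⟨θ, -, -, hzeq⟩ := hz
  rw [hzeq ω]
  have : (2 * (Real.pi : ℂ) * I * (θ ω : ℂ)) = ((2 * Real.pi * θ ω : ℝ) : ℂ) * I := by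
    push_cast; ring
  rw [this, norm_exp_ofReal_mul_I]

lemma integral_exp_int (k : ℤ) :
    ∫ x in Set.Icc (0:ℝ) 1, Complex.exp ((k : ℂ) * (2 * Real.pi * I) * (x : ℂ))
      = if k = 0 then 1 else 0 := by
  by_cases hk : k = 0
  · simp [hk]
  · rw [if_neg hk]
    have hc : (k : ℂ) * (2 * Real.pi * I) ≠ 0 := by
      apply mul_ne_zero
      · exact_mod_cast hk
      · simp [Real.pi_ne_zero, Complex.I_ne_zero, Complex.ofReal_ne_zero]
    have h1 : ∫ x in Set.Icc (0:ℝ) 1, Complex.exp ((k : ℂ) * (2 * Real.pi * I) * (x : ℂ))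
        = ∫ x in (0:ℝ)..1, Complex.exp ((k : ℂ) * (2 * Real.pi * I) * (x : ℂ)) := by
      rw [intervalIntegral.integral_of_le zero_le_one, MeasureTheory.integral_Icc_eq_integral_Ioc]
    rw [h1, integral_exp_mul_complex hc, Complex.ofReal_one, mul_one, Complex.ofReal_zero,
      mul_zero, Complex.exp_zero, Complex.exp_int_mul_two_pi_mul_I, sub_self, zero_div]

lemma uuc_integral_pow_mul_conj_pow {z : Ω → ℂ} [IsProbabilityMeasure μ]
    (hz : UniformUnitCircle μ z) (α β : ℕ) :
    ∫ ω, z ω ^ α * (starRingEnd ℂ) (z ω) ^ β ∂μ = if α = β then 1 else 0 := by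
  obtain ⟨θ, hθm, hθmap, hzeq⟩ := hz
  set k : ℤ := (α : ℤ) - β with hk
  have hpt : ∀ ω, z ω ^ α * (starRingEnd ℂ) (z ω) ^ β
      = Complex.exp ((k : ℂ) * (2 * Real.pi * I) * (θ ω : ℂ)) := by
    intro ω
    rw [hzeq ω, ← Complex.exp_conj, ← Complex.exp_nat_mul, ← Complex.exp_nat_mul,
      ← Complex.exp_add]
    congr 1
    have hrw : (2 * (Real.pi:ℂ) * I * (θ ω : ℂ)) = ((2 * Real.pi * θ ω : ℝ) : ℂ) * I := by
      push_cast; ring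
    have hconj : (starRingEnd ℂ) (2 * (Real.pi:ℂ) * I * (θ ω : ℂ))
        = -(2 * (Real.pi:ℂ) * I * (θ ω : ℂ)) := by
      rw [hrw, map_mul, Complex.conj_ofReal, Complex.conj_I]
      ring
    rw [hconj]
    push_cast [hk]
    ring
  calc ∫ ω, z ω ^ α * (starRingEnd ℂ) (z ω) ^ β ∂μ
      = ∫ ω, Complex.exp ((k : ℂ) * (2 * Real.pi * I) * (θ ω : ℂ)) ∂μ := by
        exact integral_congr_ae (Filter.Eventually.of_forall hpt)
    _ = ∫ x, Complex.exp ((k : ℂ) * (2 * Real.pi * I) * (x : ℂ)) ∂(Measure.map θ μ) := by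
        rw [integral_map hθm.aemeasurable]
        exact (Continuous.aestronglyMeasurable (by continuity))
    _ = if α = β then 1 else 0 := by
        rw [hθmap, integral_exp_int k]
        congr 1
        simp [hk, sub_eq_zero]

variable [IsProbabilityMeasure μ]

lemma integrable_bdd {g : Ω → ℂ} (hg : Measurable g) (C : ℝ) (hb : ∀ ω, ‖g ω‖ ≤ C) :
    Integrable g μ :=
  (integrable_const C).mono' hg.aestronglyMeasurable (Filter.Eventually.of_forall hb)

lemma indepFun_integral_mul_complex {X Y : Ω → ℂ} (h : IndepFun X Y μ)
    (hXm : Measurable X) (hYm : Measurable Y)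
    (hX : Integrable X μ) (hY : Integrable Y μ)
    (hXY : Integrable (fun ω => X ω * Y ω) μ) :
    ∫ ω, X ω * Y ω ∂μ = (∫ ω, X ω ∂μ) * ∫ ω, Y ω ∂μ := by
  have hrr : IndepFun (fun ω => (X ω).re) (fun ω => (Y ω).re) μ :=
    h.comp Complex.measurable_re Complex.measurable_re
  have hri : IndepFun (fun ω => (X ω).re) (fun ω => (Y ω).im) μ :=
    h.comp Complex.measurable_re Complex.measurable_im
  have hir : IndepFun (fun ω => (X ω).im) (fun ω => (Y ω).re) μ :=
    h.comp Complex.measurable_im Complex.measurable_re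
  have hii : IndepFun (fun ω => (X ω).im) (fun ω => (Y ω).im) μ :=
    h.comp Complex.measurable_im Complex.measurable_im
  have mXr : AEStronglyMeasurable (fun ω => (X ω).re) μ :=
    (Complex.measurable_re.comp hXm).aestronglyMeasurable
  have mXi : AEStronglyMeasurable (fun ω => (X ω).im) μ :=
    (Complex.measurable_im.comp hXm).aestronglyMeasurable
  have mYr : AEStronglyMeasurable (fun ω => (Y ω).re) μ :=
    (Complex.measurable_re.comp hYm).aestronglyMeasurable
  have mYi : AEStronglyMeasurable (fun ω => (Y ω).im) μ :=
    (Complex.measurable_im.comp hYm).aestronglyMeasurable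
  have irr : Integrable (fun ω => (X ω).re * (Y ω).re) μ :=
    hrr.integrable_mul hX.re hY.re
  have iri : Integrable (fun ω => (X ω).re * (Y ω).im) μ :=
    hri.integrable_mul hX.re hY.im
  have iir : Integrable (fun ω => (X ω).im * (Y ω).re) μ :=
    hir.integrable_mul hX.im hY.re
  have iii : Integrable (fun ω => (X ω).im * (Y ω).im) μ :=
    hii.integrable_mul hX.im hY.im
  have int_re : ∀ {g : Ω → ℂ}, Integrable g μ → (∫ ω, g ω ∂μ).re = ∫ ω, (g ω).re ∂μ :=
    fun {g} hg => (integral_re hg).symm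
  have int_im : ∀ {g : Ω → ℂ}, Integrable g μ → (∫ ω, g ω ∂μ).im = ∫ ω, (g ω).im ∂μ :=
    fun {g} hg => (integral_im hg).symm
  apply Complex.ext
  · rw [mul_re, int_re hXY, int_re hX, int_re hY, int_im hX, int_im hY]
    have : (fun ω => (X ω * Y ω).re)
        = fun ω => (X ω).re * (Y ω).re - (X ω).im * (Y ω).im := by
      funext ω; exact Complex.mul_re _ _
    rw [this, integral_sub irr iii, hrr.integral_fun_mul_eq_mul_integral mXr mYr, hii.integral_fun_mul_eq_mul_integral mXi mYi]
  · rw [mul_im, int_im hXY, int_re hX, int_re hY, int_im hX, int_im hY]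
    have : (fun ω => (X ω * Y ω).im)
        = fun ω => (X ω).re * (Y ω).im + (X ω).im * (Y ω).re := by
      funext ω; exact Complex.mul_im _ _
    rw [this, integral_add iri iir, hri.integral_fun_mul_eq_mul_integral mXr mYi, hir.integral_fun_mul_eq_mul_integral mXi mYr]

lemma integral_prod_of_iIndep {ι : Type*} {X : ι → Ω → ℂ}
    (hind : iIndepFun X μ) (hXm : ∀ i, Measurable (X i))
    (hbd : ∀ i ω, ‖X i ω‖ ≤ 1) (s : Finset ι) :
    ∫ ω, ∏ i ∈ s, X i ω ∂μ = ∏ i ∈ s, ∫ ω, X i ω ∂μ := by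
  classical
  induction s using Finset.cons_induction with
  | empty => simp
  | cons a s ha ih =>
    have hprodmeas : Measurable (fun ω => ∏ i ∈ s, X i ω) :=
      Finset.measurable_prod s fun i _ => hXm i
    have hprodbd : ∀ ω, ‖∏ i ∈ s, X i ω‖ ≤ 1 := fun ω => by
      rw [norm_prod]
      exact Finset.prod_le_one (fun i _ => norm_nonneg _) (fun i _ => hbd i ω)
    have hindep : IndepFun (fun ω => ∏ i ∈ s, X i ω) (X a) μ := by
      have h0 : IndepFun (∏ i ∈ s, X i) (X a) μ :=
        hind.indepFun_finsetProd_of_notMem hXm ha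
      have : (∏ i ∈ s, X i) = fun ω => ∏ i ∈ s, X i ω := by
        funext ω; exact Finset.prod_apply ω s X
      rwa [this] at h0
    have key : ∫ ω, (∏ i ∈ s, X i ω) * X a ω ∂μ
        = (∫ ω, ∏ i ∈ s, X i ω ∂μ) * ∫ ω, X a ω ∂μ := by
      apply indepFun_integral_mul_complex hindep hprodmeas (hXm a)
        (integrable_bdd hprodmeas 1 hprodbd) (integrable_bdd (hXm a) 1 (hbd a))
        (integrable_bdd (hprodmeas.mul (hXm a)) 1 ?_)
      intro ω
      rw [norm_mul]
      exact mul_le_one₀ (hprodbd ω) (norm_nonneg _) (hbd a ω)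
    calc ∫ ω, ∏ i ∈ Finset.cons a s ha, X i ω ∂μ
        = ∫ ω, (∏ i ∈ s, X i ω) * X a ω ∂μ := by
          apply integral_congr_ae
          apply Filter.Eventually.of_forall
          intro ω
          simp only [Finset.prod_cons]; ring
      _ = (∫ ω, ∏ i ∈ s, X i ω ∂μ) * ∫ ω, X a ω ∂μ := key
      _ = ∏ i ∈ Finset.cons a s ha, ∫ ω, X i ω ∂μ := by rw [Finset.prod_cons, ih, mul_comm]

variable {f : Ω → ℕ → ℂ} (hf : IsSteinhaus μ f)

include hf

lemma norm_f_prime (ω : Ω) (p : Nat.Primes) : ‖f ω p‖ = 1 :=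
  norm_of_uuc (hf.2.1 p) ω

lemma norm_f (ω : Ω) (n : ℕ) : ‖f ω n‖ = 1 := by
  rw [hf.2.2 ω n, norm_prod]
  rw [Finset.prod_congr rfl fun p hp => ?_, Finset.prod_const_one]
  rw [norm_pow, norm_f_prime hf ω ⟨p, Nat.prime_of_mem_primeFactors hp⟩, one_pow]

lemma f_eq_prod_subset (ω : Ω) {n : ℕ} (hn : n ≠ 0) {S : Finset ℕ}
    (hS : n.primeFactors ⊆ S) :
    f ω n = ∏ p ∈ S, f ω p ^ n.factorization p := by
  rw [hf.2.2 ω n]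
  apply Finset.prod_subset hS
  intro p _ hp
  rw [← Nat.support_factorization] at hp
  rw [Finsupp.notMem_support_iff.mp hp, pow_zero]

lemma f_one (ω : Ω) : f ω 1 = 1 := by
  rw [hf.2.2 ω 1]; simp

lemma f_mul (ω : Ω) {m n : ℕ} (hm : m ≠ 0) (hn : n ≠ 0) :
    f ω (m * n) = f ω m * f ω n := by
  have hmn : m * n ≠ 0 := mul_ne_zero hm hn
  rw [f_eq_prod_subset hf ω hmn (subset_refl _),
    f_eq_prod_subset hf ω hm (Nat.primeFactors_mul hm hn ▸ Finset.subset_union_left),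
    f_eq_prod_subset hf ω hn (Nat.primeFactors_mul hm hn ▸ Finset.subset_union_right),
    ← Finset.prod_mul_distrib]
  apply Finset.prod_congr rfl
  intro p _
  rw [Nat.factorization_mul hm hn, Finsupp.add_apply, pow_add]

lemma f_prod (ω : Ω) {ι : Type*} (s : Finset ι) (g : ι → ℕ) (hg : ∀ i ∈ s, g i ≠ 0) :
    f ω (∏ i ∈ s, g i) = ∏ i ∈ s, f ω (g i) := by
  classical
  induction s using Finset.cons_induction with
  | empty => simpa using f_one hf ω
  | cons a s ha ih =>
    rw [Finset.prod_cons, Finset.prod_cons,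
      f_mul hf ω (hg a (Finset.mem_cons_self a s))
        (Finset.prod_ne_zero_iff.mpr fun i hi => hg i (Finset.mem_cons_of_mem hi)),
      ih fun i hi => hg i (Finset.mem_cons_of_mem hi)]

lemma f_orth (hmeas : ∀ n, Measurable fun ω => f ω n) {n m : ℕ} (hn : n ≠ 0) (hm : m ≠ 0) :
    ∫ ω, f ω n * (starRingEnd ℂ) (f ω m) ∂μ = if n = m then 1 else 0 := by
  classical
  set S : Finset ℕ := n.primeFactors ∪ m.primeFactors with hS
  have hprimeS : ∀ p ∈ S, p.Prime := fun p hp => by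
    rcases Finset.mem_union.mp hp with h | h
    · exact Nat.prime_of_mem_primeFactors h
    · exact Nat.prime_of_mem_primeFactors h
  -- pointwise expansion
  have hpt : ∀ ω, f ω n * (starRingEnd ℂ) (f ω m)
      = ∏ p ∈ S, (f ω p ^ n.factorization p * (starRingEnd ℂ) (f ω p) ^ m.factorization p) := by
    intro ω
    rw [f_eq_prod_subset hf ω hn Finset.subset_union_left,
      f_eq_prod_subset hf ω hm Finset.subset_union_right, map_prod,
      ← Finset.prod_mul_distrib]
    exact Finset.prod_congr rfl fun p _ => by rw [map_pow]
  -- transfer to Nat.Primes index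
  set S' : Finset Nat.Primes := S.attach.image (fun p => (⟨p.1, hprimeS p.1 p.2⟩ : Nat.Primes))
    with hS'
  have hSval : ∀ (g : ℕ → ℂ), ∏ p ∈ S', g p.1 = ∏ p ∈ S, g p := by
    intro g
    rw [hS']
    refine (Finset.prod_image ?hinj).trans (Finset.prod_attach S (fun p => g p))
    intro p _ q _ h
    exact Subtype.ext (congrArg (fun x : Nat.Primes => x.val) h)
  set X : Nat.Primes → Ω → ℂ := fun p ω =>
    f ω p.1 ^ n.factorization p.1 * (starRingEnd ℂ) (f ω p.1) ^ m.factorization p.1 with hX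
  have hXm : ∀ p, Measurable (X p) := fun p =>
    (((hmeas p.1).pow_const _).mul (((Complex.continuous_conj.measurable.comp (hmeas p.1))).pow_const _))
  have hXbd : ∀ p ω, ‖X p ω‖ ≤ 1 := fun p ω => by
    rw [hX]
    simp only [norm_mul, norm_pow, RCLike.norm_conj]
    rw [norm_f_prime hf ω p]
    simp
  have hXind : iIndepFun X μ := by
    apply (hf.1).comp
      (g := fun p z => z ^ n.factorization p.1 * (starRingEnd ℂ) z ^ m.factorization p.1)
    intro p
    exact (measurable_id.pow_const _).mul ((Complex.continuous_conj.measurable).pow_const _)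
  have hint : ∫ ω, ∏ p ∈ S', X p ω ∂μ = ∏ p ∈ S', ∫ ω, X p ω ∂μ :=
    integral_prod_of_iIndep hXind hXm hXbd S'
  have hXint : ∀ p : Nat.Primes, ∫ ω, X p ω ∂μ
      = if n.factorization p.1 = m.factorization p.1 then 1 else 0 := fun p =>
    uuc_integral_pow_mul_conj_pow (hf.2.1 p) _ _
  have hmain : ∫ ω, f ω n * (starRingEnd ℂ) (f ω m) ∂μ
      = ∏ p ∈ S, (if n.factorization p = m.factorization p then (1:ℂ) else 0) := by
    rw [integral_congr_ae (Filter.Eventually.of_forall hpt)]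
    have : ∀ ω, ∏ p ∈ S, (f ω p ^ n.factorization p
        * (starRingEnd ℂ) (f ω p) ^ m.factorization p) = ∏ p ∈ S', X p ω := fun ω =>
      (hSval fun p => f ω p ^ n.factorization p
        * (starRingEnd ℂ) (f ω p) ^ m.factorization p).symm
    rw [integral_congr_ae (Filter.Eventually.of_forall this), hint]
    rw [Finset.prod_congr rfl fun p _ => hXint p]
    exact hSval fun p => if n.factorization p = m.factorization p then (1:ℂ) else 0
  rw [hmain]
  by_cases h : n = m
  · subst h
    simp
  · rw [if_neg h]
    -- there exists a prime in S where factorizations differ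
    have hex : ∃ p ∈ S, n.factorization p ≠ m.factorization p := by
      by_contra hno
      push_neg at hno
      apply h
      have hfac : n.factorization = m.factorization := by
        ext p
        by_cases hp : p ∈ S
        · exact hno p hp
        · have h1 : p ∉ n.primeFactors := fun hc => hp (Finset.mem_union_left _ hc)
          have h2 : p ∉ m.primeFactors := fun hc => hp (Finset.mem_union_right _ hc)
          rw [← Nat.support_factorization] at h1 h2
          rw [Finsupp.notMem_support_iff.mp h1, Finsupp.notMem_support_iff.mp h2]
      have := Nat.factorization_inj (Set.mem_setOf.mpr hn) (Set.mem_setOf.mpr hm) hfac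
      exact this
    obtain ⟨p, hpS, hpne⟩ := hex
    exact Finset.prod_eq_zero hpS (if_neg hpne)

end SteinhausAux

open SteinhausAux

/-- Hypercontractive upper bound for Steinhaus random multiplicative
functions: `E[|Σ_{n ≤ N} aₙ f(n)|^{2q}] ≤ (Σ_{n ≤ N} |aₙ|² d_q(n))^q`. -/
theorem steinhaus_hypercontractive {Ω : Type*} [MeasurableSpace Ω] (μ : Measure Ω)
    [IsProbabilityMeasure μ] (f : Ω → ℕ → ℂ)
    (hmeas : ∀ n, Measurable fun ω => f ω n) (hf : IsSteinhaus μ f)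
    (q : ℕ) (N : ℕ) (a : ℕ → ℂ) :
    ∫ ω, ‖∑ n ∈ Finset.Icc 1 N, a n * f ω n‖ ^ (2 * q) ∂μ ≤
      (∑ n ∈ Finset.Icc 1 N, ‖a n‖ ^ 2 * (dfold q n : ℝ)) ^ q := by
  classical
  set T : Finset ℕ := Finset.Icc 1 N with hT
  set P : Finset (Fin q → ℕ) := Fintype.piFinset (fun _ : Fin q => T) with hP
  set c : (Fin q → ℕ) → ℂ := fun t => ∏ i, a (t i) with hc
  set Pt : (Fin q → ℕ) → ℕ := fun t => ∏ i, t i with hPt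
  have hmemP : ∀ {t : Fin q → ℕ}, t ∈ P → ∀ i, 1 ≤ t i ∧ t i ≤ N := by
    intro t ht i
    rw [hP, Fintype.mem_piFinset] at ht
    exact Finset.mem_Icc.mp (ht i)
  have hPtpos : ∀ {t : Fin q → ℕ}, t ∈ P → 1 ≤ Pt t := by
    intro t ht
    exact Finset.one_le_prod' fun i _ => (hmemP ht i).1
  -- Step 1: pointwise rewriting of the 2q-th power
  have h1 : ∀ ω, (∑ n ∈ T, a n * f ω n) ^ q = ∑ t ∈ P, c t * f ω (Pt t) := by
    intro ω
    have e0 : (∑ n ∈ T, a n * f ω n) ^ q = ∏ _i : Fin q, ∑ n ∈ T, a n * f ω n := by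
      rw [Finset.prod_const, Finset.card_univ, Fintype.card_fin]
    rw [e0, Finset.prod_univ_sum]
    apply Finset.sum_congr rfl
    intro t ht
    rw [Finset.prod_mul_distrib, hc, hPt]
    have : f ω (∏ i, t i) = ∏ i, f ω (t i) :=
      f_prod hf ω Finset.univ t (fun i _ => Nat.one_le_iff_ne_zero.mp (hmemP ht i).1)
    rw [this]
  have h2 : ∀ ω, ‖∑ n ∈ T, a n * f ω n‖ ^ (2 * q)
      = ‖∑ t ∈ P, c t * f ω (Pt t)‖ ^ 2 := by
    intro ω
    rw [mul_comm 2 q, pow_mul, ← norm_pow, h1 ω]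
  rw [integral_congr_ae (Filter.Eventually.of_forall h2)]
  -- Step 2: compute the second moment
  set Y : Ω → ℂ := fun ω => ∑ t ∈ P, c t * f ω (Pt t) with hY
  have hFmeas : ∀ t : Fin q → ℕ, Measurable fun ω => f ω (Pt t) := fun t => hmeas _
  have hYmeas : Measurable Y := by
    apply Finset.measurable_sum
    intro t _
    exact (measurable_const.mul (hFmeas t))
  have hprodmeas : ∀ t s : Fin q → ℕ,
      Measurable fun ω => f ω (Pt t) * (starRingEnd ℂ) (f ω (Pt s)) := fun t s =>
    (hFmeas t).mul (Complex.continuous_conj.measurable.comp (hFmeas s))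
  have hprodbd : ∀ t s : Fin q → ℕ, ∀ ω, ‖f ω (Pt t) * (starRingEnd ℂ) (f ω (Pt s))‖ ≤ 1 := by
    intro t s ω
    rw [norm_mul, RCLike.norm_conj, norm_f hf, norm_f hf, one_mul]
  have hprodint : ∀ t s : Fin q → ℕ,
      Integrable (fun ω => f ω (Pt t) * (starRingEnd ℂ) (f ω (Pt s))) μ := fun t s =>
    integrable_bdd (hprodmeas t s) 1 (hprodbd t s)
  have hYbd : ∀ ω, ‖Y ω‖ ≤ ∑ t ∈ P, ‖c t‖ := by
    intro ω
    refine (norm_sum_le _ _).trans (Finset.sum_le_sum fun t _ => ?_)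
    rw [norm_mul, norm_f hf, mul_one]
  have hconjYmeas : Measurable fun ω => (starRingEnd ℂ) (Y ω) :=
    Complex.continuous_conj.measurable.comp hYmeas
  have hYint : Integrable (fun ω => Y ω * (starRingEnd ℂ) (Y ω)) μ := by
    apply integrable_bdd (hYmeas.mul hconjYmeas)
      ((∑ t ∈ P, ‖c t‖) * ∑ t ∈ P, ‖c t‖)
    intro ω
    rw [Pi.mul_apply, norm_mul, RCLike.norm_conj]
    exact mul_le_mul (hYbd ω) (hYbd ω) (norm_nonneg _)
      (Finset.sum_nonneg fun t _ => norm_nonneg _)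
  have hexp : ∀ ω, Y ω * (starRingEnd ℂ) (Y ω)
      = ∑ t ∈ P, ∑ s ∈ P, (c t * (starRingEnd ℂ) (c s))
          * (f ω (Pt t) * (starRingEnd ℂ) (f ω (Pt s))) := by
    intro ω
    rw [hY]
    simp only [map_sum, map_mul]
    rw [Finset.sum_mul_sum]
    apply Finset.sum_congr rfl
    intro t _
    apply Finset.sum_congr rfl
    intro s _
    ring
  have key : ∫ ω, ‖Y ω‖ ^ 2 ∂μ
      = ∑ t ∈ P, ∑ s ∈ P,
          (if Pt t = Pt s then (c t * (starRingEnd ℂ) (c s)).re else 0) := by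
    have e1 : ∀ ω, ‖Y ω‖ ^ 2 = (Y ω * (starRingEnd ℂ) (Y ω)).re := by
      intro ω
      rw [Complex.mul_conj]
      simp [Complex.normSq_eq_norm_sq, ← Complex.ofReal_pow]
    have e1' : ∫ ω, (Y ω * (starRingEnd ℂ) (Y ω)).re ∂μ
        = (∫ ω, Y ω * (starRingEnd ℂ) (Y ω) ∂μ).re := integral_re hYint
    rw [integral_congr_ae (Filter.Eventually.of_forall e1), e1']
    have e2 : ∫ ω, Y ω * (starRingEnd ℂ) (Y ω) ∂μ
        = ∑ t ∈ P, ∑ s ∈ P, (c t * (starRingEnd ℂ) (c s))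
            * (if Pt t = Pt s then (1:ℂ) else 0) := by
      rw [integral_congr_ae (Filter.Eventually.of_forall hexp)]
      rw [integral_finset_sum _ (fun t _ => integrable_finset_sum _
        (fun s _ => ((hprodint t s).const_mul _)))]
      apply Finset.sum_congr rfl
      intro t ht
      rw [integral_finset_sum _ (fun s _ => ((hprodint t s).const_mul _))]
      apply Finset.sum_congr rfl
      intro s hs
      rw [integral_const_mul]
      congr 1
      exact f_orth hf hmeas (Nat.one_le_iff_ne_zero.mp (hPtpos ht))
        (Nat.one_le_iff_ne_zero.mp (hPtpos hs))
    rw [e2]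
    rw [Complex.re_sum]
    apply Finset.sum_congr rfl
    intro t _
    rw [Complex.re_sum]
    apply Finset.sum_congr rfl
    intro s _
    rw [mul_ite, mul_one, mul_zero, apply_ite Complex.re, Complex.zero_re]
  rw [key]
  -- Step 3: the counting bound
  have step3 : ∑ t ∈ P, ∑ s ∈ P,
      (if Pt t = Pt s then (c t * (starRingEnd ℂ) (c s)).re else 0)
      ≤ ∑ t ∈ P, ‖c t‖ ^ 2 * ∑ s ∈ P, (if Pt t = Pt s then (1:ℝ) else 0) := by
    have hsplit : ∀ t ∈ P, ∀ s ∈ P,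
        (if Pt t = Pt s then (c t * (starRingEnd ℂ) (c s)).re else 0)
        ≤ (if Pt t = Pt s then ‖c t‖^2/2 else 0)
          + (if Pt t = Pt s then ‖c s‖^2/2 else 0) := by
      intro t _ s _
      by_cases h : Pt t = Pt s
      · rw [if_pos h, if_pos h, if_pos h]
        calc (c t * (starRingEnd ℂ) (c s)).re ≤ ‖c t * (starRingEnd ℂ) (c s)‖ :=
              Complex.re_le_norm _
          _ = ‖c t‖ * ‖c s‖ := by rw [norm_mul, RCLike.norm_conj]
          _ ≤ ‖c t‖^2/2 + ‖c s‖^2/2 := by nlinarith [sq_nonneg (‖c t‖ - ‖c s‖)]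
      · rw [if_neg h, if_neg h, if_neg h]; simp
    calc ∑ t ∈ P, ∑ s ∈ P, (if Pt t = Pt s then (c t * (starRingEnd ℂ) (c s)).re else 0)
        ≤ ∑ t ∈ P, ∑ s ∈ P, ((if Pt t = Pt s then ‖c t‖^2/2 else 0)
            + (if Pt t = Pt s then ‖c s‖^2/2 else 0)) :=
          Finset.sum_le_sum fun t ht => Finset.sum_le_sum fun s hs => hsplit t ht s hs
      _ = (∑ t ∈ P, ∑ s ∈ P, (if Pt t = Pt s then ‖c t‖^2/2 else 0))
          + ∑ t ∈ P, ∑ s ∈ P, (if Pt t = Pt s then ‖c s‖^2/2 else 0) := by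
          rw [← Finset.sum_add_distrib]
          exact Finset.sum_congr rfl fun t _ => Finset.sum_add_distrib
      _ = (∑ t ∈ P, ∑ s ∈ P, (if Pt t = Pt s then ‖c t‖^2/2 else 0))
          + ∑ t ∈ P, ∑ s ∈ P, (if Pt t = Pt s then ‖c t‖^2/2 else 0) := by
          congr 1
          rw [Finset.sum_comm]
          apply Finset.sum_congr rfl
          intro s _
          apply Finset.sum_congr rfl
          intro t _
          congr 1
          simp [eq_comm]
      _ = ∑ t ∈ P, ‖c t‖ ^ 2 * ∑ s ∈ P, (if Pt t = Pt s then (1:ℝ) else 0) := by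
          rw [← two_mul, Finset.mul_sum]
          apply Finset.sum_congr rfl
          intro t _
          rw [Finset.mul_sum, Finset.mul_sum]
          apply Finset.sum_congr rfl
          intro s _
          by_cases h : Pt t = Pt s <;> simp [h] <;> ring
  refine step3.trans ?_
  -- Step 4: count solutions by dfold
  have step4 : ∀ t ∈ P, ∑ s ∈ P, (if Pt t = Pt s then (1:ℝ) else 0)
      ≤ (∏ i, (dfold q (t i) : ℝ)) := by
    intro t ht
    have hcard : ∑ s ∈ P, (if Pt t = Pt s then (1:ℝ) else 0)
        = ((P.filter fun s => Pt t = Pt s).card : ℝ) := by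
      rw [← Finset.sum_filter, Finset.sum_const, nsmul_eq_mul, mul_one]
    rw [hcard]
    have hsub : (P.filter fun s => Pt t = Pt s) ⊆
        ((Fintype.piFinset fun _ : Fin q => Finset.Icc 1 (Pt t)).filter
          fun s => ∏ i, s i = Pt t) := by
      intro s hs
      obtain ⟨hsP, hseq⟩ := Finset.mem_filter.mp hs
      rw [mem_dfoldSet]
      constructor
      · intro i
        rw [Finset.mem_Icc]
        refine ⟨(hmemP hsP i).1, ?_⟩
        have hdvd : s i ∣ Pt s := Finset.dvd_prod_of_mem _ (Finset.mem_univ i)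
        rw [← hseq] at hdvd
        exact Nat.le_of_dvd (hPtpos ht) hdvd
      · exact hseq.symm
    have hle1 : (P.filter fun s => Pt t = Pt s).card ≤ dfold q (Pt t) :=
      Finset.card_le_card hsub
    have hle2 : dfold q (Pt t) ≤ ∏ i, dfold q (t i) :=
      dfold_prod_le q Finset.univ t fun i _ => (hmemP ht i).1
    calc ((P.filter fun s => Pt t = Pt s).card : ℝ) ≤ (dfold q (Pt t) : ℝ) := by
          exact_mod_cast hle1
      _ ≤ ∏ i, (dfold q (t i) : ℝ) := by
          rw [← Nat.cast_prod]
          exact_mod_cast hle2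
  calc ∑ t ∈ P, ‖c t‖ ^ 2 * ∑ s ∈ P, (if Pt t = Pt s then (1:ℝ) else 0)
      ≤ ∑ t ∈ P, ‖c t‖ ^ 2 * ∏ i, (dfold q (t i) : ℝ) :=
        Finset.sum_le_sum fun t ht =>
          mul_le_mul_of_nonneg_left (step4 t ht) (sq_nonneg _)
    _ = (∑ n ∈ T, ‖a n‖ ^ 2 * (dfold q n : ℝ)) ^ q := by
        have e0 : (∑ n ∈ T, ‖a n‖ ^ 2 * (dfold q n : ℝ)) ^ q
            = ∏ _i : Fin q, ∑ n ∈ T, ‖a n‖ ^ 2 * (dfold q n : ℝ) := by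
          rw [Finset.prod_const, Finset.card_univ, Fintype.card_fin]
        rw [e0, Finset.prod_univ_sum]
        apply Finset.sum_congr rfl
        intro t _
        rw [Finset.prod_mul_distrib, hc, norm_prod, ← Finset.prod_pow]
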